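/- Assume the continuous functions q_i satisfy F_1(x_0, y_0) = y_0, F_N(x_N, y_N) = y_N, and F_i(x_N, y_N) = F_{i+1}(x_0, y_0) = ỹ_i with ỹ_i ∈ [y_i − ε, y_i + ε] for i = 1,…,N−1, where F_i(x, y) = α_i y + q_i(x) and ε > 0. Then the operator T : C_{y0,yN}(I) → C_{y0,yN}(I), (Tg)(x) = α_i g(L_i^{-1}(x)) + q_i(L_i^{-1}(x)) for x ∈ [x_{i-1}, x_i], is well-defined and a contraction with factor |α|_∞ = max_i |α_i| < 1 in the supremum norm, and its unique fixed point f is continuous on I and satisfies |f(x_i) − y_i| ≤ ε for all i = 0,1,…,N. -/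

import Mathlib

open Set

noncomputable def aC (x : ℕ → ℝ) (N i : ℕ) : ℝ := (x (i + 1) - x i) / (x N - x 0)

noncomputable def bC (x : ℕ → ℝ) (N i : ℕ) : ℝ := (x N * x i - x 0 * x (i + 1)) / (x N - x 0)

/-- The inverse `L i ⁻¹ t = (t - b i) / a i` of the affine map `L i`. -/
noncomputable def LmInv (x : ℕ → ℝ) (N i : ℕ) (t : ℝ) : ℝ := (t - bC x N i) / aC x N i

lemma glueCOn {X Y : Type*} [TopologicalSpace X] [TopologicalSpace Y] {f : X → Y} {s t : Set X}
    (hs : IsClosed s) (ht : IsClosed t) (hfs : ContinuousOn f s) (hft : ContinuousOn f t) :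
    ContinuousOn f (s ∪ t) := by
  intro p hp
  apply ContinuousWithinAt.union
  · by_cases h : p ∈ s
    · exact hfs p h
    · exact continuousWithinAt_of_notMem_closure (by rwa [hs.closure_eq])
  · by_cases h : p ∈ t
    · exact hft p h
    · exact continuousWithinAt_of_notMem_closure (by rwa [ht.closure_eq])

lemma LmInv_left (x : ℕ → ℝ) (N i : ℕ) (h0 : x 0 < x N) (hi : x i < x (i + 1)) :
    LmInv x N i (x i) = x 0 := by
  unfold LmInv aC bC
  have h1 : x N - x 0 ≠ 0 := by linarith
  have h2 : x (i + 1) - x i ≠ 0 := by linarith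
  field_simp
  ring

lemma LmInv_right (x : ℕ → ℝ) (N i : ℕ) (h0 : x 0 < x N) (hi : x i < x (i + 1)) :
    LmInv x N i (x (i + 1)) = x N := by
  unfold LmInv aC bC
  have h1 : x N - x 0 ≠ 0 := by linarith
  have h2 : x (i + 1) - x i ≠ 0 := by linarith
  field_simp
  ring

lemma LmInv_mono (x : ℕ → ℝ) (N i : ℕ) (h0 : x 0 < x N) (hi : x i < x (i + 1))
    {s t : ℝ} (hst : s ≤ t) : LmInv x N i s ≤ LmInv x N i t := by
  have ha : 0 < aC x N i := div_pos (by linarith) (by linarith)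
  unfold LmInv
  gcongr

lemma LmInv_cont (x : ℕ → ℝ) (N i : ℕ) : Continuous (LmInv x N i) := by
  unfold LmInv
  exact (continuous_id.sub continuous_const).div_const _

/-- With the ε-perturbed join-up conditions, the RB operator on `C_{y0,yN}(I)` is well-defined,
is a contraction with factor `max |α i| < 1`, and its unique fixed point `f` is continuous and
satisfies `|f (x i) - y i| ≤ ε` at every knot. -/
theorem stmt4
    (N : ℕ) (hN : 2 ≤ N)
    (x y : ℕ → ℝ)
    (hx : ∀ i, i < N → x i < x (i + 1))
    (α : ℕ → ℝ) (hα : ∀ i, i < N → |α i| < 1)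
    (q : ℕ → ℝ → ℝ)
    (hqc : ∀ i, i < N → ContinuousOn (q i) (Icc (x 0) (x N)))
    (ε : ℝ) (hε : 0 < ε)
    (ytil : ℕ → ℝ)
    (hytil : ∀ i, 1 ≤ i → i < N → ytil i ∈ Icc (y i - ε) (y i + ε))
    (hjoin0 : α 0 * y 0 + q 0 (x 0) = y 0)
    (hjoinN : α (N - 1) * y N + q (N - 1) (x N) = y N)
    (hjoin : ∀ i, i + 1 < N →
      α i * y N + q i (x N) = ytil (i + 1) ∧ α (i + 1) * y 0 + q (i + 1) (x 0) = ytil (i + 1))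
    (T : (ℝ → ℝ) → ℝ → ℝ)
    (hT : ∀ g : ℝ → ℝ, g (x 0) = y 0 → g (x N) = y N → ∀ i, i < N →
      ∀ t ∈ Icc (x i) (x (i + 1)),
        T g t = α i * g (LmInv x N i t) + q i (LmInv x N i t)) :
    (∀ g : ℝ → ℝ, ContinuousOn g (Icc (x 0) (x N)) → g (x 0) = y 0 → g (x N) = y N →
      ContinuousOn (T g) (Icc (x 0) (x N)) ∧ T g (x 0) = y 0 ∧ T g (x N) = y N) ∧
    (Finset.range N).sup' (Finset.nonempty_range_iff.mpr (by omega)) (fun i => |α i|) < 1 ∧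
    (∀ g h : ℝ → ℝ,
      ContinuousOn g (Icc (x 0) (x N)) → g (x 0) = y 0 → g (x N) = y N →
      ContinuousOn h (Icc (x 0) (x N)) → h (x 0) = y 0 → h (x N) = y N →
      (⨆ t : Icc (x 0) (x N), |T g (t : ℝ) - T h (t : ℝ)|) ≤
        (Finset.range N).sup' (Finset.nonempty_range_iff.mpr (by omega)) (fun i => |α i|) *
          ⨆ t : Icc (x 0) (x N), |g (t : ℝ) - h (t : ℝ)|) ∧
    (∃ f : ℝ → ℝ, ContinuousOn f (Icc (x 0) (x N)) ∧ f (x 0) = y 0 ∧ f (x N) = y N ∧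
      (∀ t ∈ Icc (x 0) (x N), T f t = f t) ∧
      (∀ j, j ≤ N → |f (x j) - y j| ≤ ε) ∧
      (∀ g : ℝ → ℝ, ContinuousOn g (Icc (x 0) (x N)) → g (x 0) = y 0 → g (x N) = y N →
        (∀ t ∈ Icc (x 0) (x N), T g t = g t) →
        ∀ t ∈ Icc (x 0) (x N), g t = f t)) := by
  -- basic facts about the knots
  have hmono : ∀ j, j ≤ N → ∀ i, i ≤ j → x i ≤ x j := by
    intro j hj
    induction j with
    | zero => intro i hi; rw [Nat.le_zero.mp hi]
    | succ k ih =>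
      intro i hi
      rcases Nat.eq_or_lt_of_le hi with rfl | h
      · exact le_rfl
      · exact le_trans (ih (by omega) i (by omega)) (le_of_lt (hx k (by omega)))
  have h0N : x 0 < x N := lt_of_lt_of_le (hx 0 (by omega)) (hmono N le_rfl 1 (by omega))
  have hle : x 0 ≤ x N := le_of_lt h0N
  have hmem : ∀ i, i ≤ N → x i ∈ Icc (x 0) (x N) :=
    fun i hi => ⟨hmono i hi 0 (by omega), hmono N le_rfl i hi⟩
  have hmaps : ∀ i, i < N → ∀ t ∈ Icc (x i) (x (i + 1)), LmInv x N i t ∈ Icc (x 0) (x N) := by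
    intro i hi t ht
    constructor
    · rw [← LmInv_left x N i h0N (hx i hi)]
      exact LmInv_mono x N i h0N (hx i hi) ht.1
    · rw [← LmInv_right x N i h0N (hx i hi)]
      exact LmInv_mono x N i h0N (hx i hi) ht.2
  have hpiece : ∀ t ∈ Icc (x 0) (x N), ∃ i, i < N ∧ t ∈ Icc (x i) (x (i + 1)) := by
    have key : ∀ k, 1 ≤ k → k ≤ N → ∀ t ∈ Icc (x 0) (x k),
        ∃ i, i < k ∧ t ∈ Icc (x i) (x (i + 1)) := by
      intro k
      induction k with
      | zero => omega
      | succ m ih =>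
        intro _ hkN t ht
        by_cases hm : m = 0
        · exact ⟨0, by omega, by rw [hm] at ht; exact ht⟩
        · by_cases hle2 : t ≤ x m
          · obtain ⟨i, hi, h2⟩ := ih (by omega) (by omega) t ⟨ht.1, hle2⟩
            exact ⟨i, by omega, h2⟩
          · exact ⟨m, by omega, ⟨le_of_lt (lt_of_not_ge hle2), ht.2⟩⟩
    exact fun t ht => key N (by omega) le_rfl t ht
  -- the contraction factor
  set A : ℝ := (Finset.range N).sup' (Finset.nonempty_range_iff.mpr (by omega)) (fun i => |α i|)
    with hAdef
  have hAi : ∀ i, i < N → |α i| ≤ A :=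
    fun i hi => Finset.le_sup' (fun i => |α i|) (Finset.mem_range.mpr hi)
  have hA0 : 0 ≤ A := le_trans (abs_nonneg (α 0)) (hAi 0 (by omega))
  have hA1 : A < 1 := by
    rw [hAdef, Finset.sup'_lt_iff]
    exact fun i hi => hα i (Finset.mem_range.mp hi)
  -- Part 1: well-definedness
  have part1 : ∀ g : ℝ → ℝ, ContinuousOn g (Icc (x 0) (x N)) → g (x 0) = y 0 → g (x N) = y N →
      ContinuousOn (T g) (Icc (x 0) (x N)) ∧ T g (x 0) = y 0 ∧ T g (x N) = y N := by
    intro g hg hg0 hgN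
    have hpc : ∀ i, i < N → ContinuousOn (T g) (Icc (x i) (x (i + 1))) := by
      intro i hi
      have hφ : ContinuousOn (fun t => α i * g (LmInv x N i t) + q i (LmInv x N i t))
          (Icc (x i) (x (i + 1))) := by
        apply ContinuousOn.add
        · exact continuousOn_const.mul
            (hg.comp (LmInv_cont x N i).continuousOn (hmaps i hi))
        · exact (hqc i hi).comp (LmInv_cont x N i).continuousOn (hmaps i hi)
      exact hφ.congr (fun t ht => hT g hg0 hgN i hi t ht)
    have hglue : ∀ k, 1 ≤ k → k ≤ N → ContinuousOn (T g) (Icc (x 0) (x k)) := by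
      intro k
      induction k with
      | zero => omega
      | succ m ih =>
        intro _ hkN
        by_cases hm : m = 0
        · rw [hm]; exact hpc 0 (by omega)
        · rw [← Icc_union_Icc_eq_Icc (hmono m (by omega) 0 (by omega))
            (le_of_lt (hx m (by omega)))]
          exact glueCOn isClosed_Icc isClosed_Icc (ih (by omega) (by omega)) (hpc m (by omega))
    have hN1 : N - 1 + 1 = N := by omega
    have hend0 : T g (x 0) = y 0 := by
      have h := hT g hg0 hgN 0 (by omega) (x 0) ⟨le_rfl, le_of_lt (hx 0 (by omega))⟩
      rw [LmInv_left x N 0 h0N (hx 0 (by omega)), hg0] at h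
      rw [h, hjoin0]
    have hendN : T g (x N) = y N := by
      have hmemN : x N ∈ Icc (x (N - 1)) (x (N - 1 + 1)) := by
        rw [hN1]; exact ⟨hmono N le_rfl (N - 1) (by omega), le_rfl⟩
      have h := hT g hg0 hgN (N - 1) (by omega) (x N) hmemN
      have hr : LmInv x N (N - 1) (x N) = x N := by
        have := LmInv_right x N (N - 1) h0N (hx (N - 1) (by omega))
        rwa [hN1] at this
      rw [hr, hgN] at h
      rw [h, hjoinN]
    exact ⟨hglue N (by omega) le_rfl, hend0, hendN⟩
  refine ⟨part1, hA1, ?_, ?_⟩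
  -- Part 3: contraction estimate in sup norm
  · intro g h hg hg0 hgN hh hh0 hhN
    haveI : Nonempty (Icc (x 0) (x N)) := ⟨⟨x 0, hmem 0 (by omega)⟩⟩
    set M : ℝ := ⨆ t : Icc (x 0) (x N), |g (t : ℝ) - h (t : ℝ)| with hMdef
    have hbdd : BddAbove (range fun t : Icc (x 0) (x N) => |g (t : ℝ) - h (t : ℝ)|) := by
      obtain ⟨C, hC⟩ := (isCompact_Icc.image_of_continuousOn ((hg.sub hh).abs)).bddAbove
      exact ⟨C, by rintro _ ⟨⟨u, hu⟩, rfl⟩; exact hC ⟨u, hu, rfl⟩⟩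
    have hM : ∀ u ∈ Icc (x 0) (x N), |g u - h u| ≤ M :=
      fun u hu => le_ciSup hbdd (⟨u, hu⟩ : Icc (x 0) (x N))
    have hM0 : 0 ≤ M := le_trans (abs_nonneg _) (hM (x 0) (hmem 0 (by omega)))
    apply ciSup_le
    rintro ⟨t, ht⟩
    obtain ⟨i, hi, hti⟩ := hpiece t ht
    rw [hT g hg0 hgN i hi t hti, hT h hh0 hhN i hi t hti]
    have heq : α i * g (LmInv x N i t) + q i (LmInv x N i t) -
        (α i * h (LmInv x N i t) + q i (LmInv x N i t)) =
        α i * (g (LmInv x N i t) - h (LmInv x N i t)) := by ring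
    rw [heq, abs_mul]
    exact mul_le_mul (hAi i hi) (hM _ (hmaps i hi t hti)) (abs_nonneg _) hA0
  -- Part 4: existence and uniqueness of the fixed point
  · set K : Set ℝ := Icc (x 0) (x N) with hKdef
    have hx0K : x 0 ∈ K := hmem 0 (by omega)
    have hxNK : x N ∈ K := hmem N le_rfl
    set Sset : Set C(K, ℝ) := {F | F ⟨x 0, hx0K⟩ = y 0 ∧ F ⟨x N, hxNK⟩ = y N} with hSdef
    have hScl : IsClosed Sset :=
      (isClosed_eq (continuous_eval_const _) continuous_const).inter
        (isClosed_eq (continuous_eval_const _) continuous_const)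
    haveI : CompleteSpace Sset := hScl.completeSpace_coe
    -- extension operator
    have hext_eq : ∀ (F : C(K, ℝ)) (t : ℝ) (ht : t ∈ K),
        IccExtend hle (fun p => F p) t = F ⟨t, ht⟩ := fun F t ht => IccExtend_of_mem hle _ ht
    have hextC : ∀ F : C(K, ℝ), Continuous (IccExtend hle (fun p => F p)) :=
      fun F => F.continuous.Icc_extend'
    have hext0 : ∀ F : Sset, IccExtend hle (fun p => F.1 p) (x 0) = y 0 := by
      intro F; rw [hext_eq F.1 (x 0) hx0K]; exact F.2.1
    have hextN : ∀ F : Sset, IccExtend hle (fun p => F.1 p) (x N) = y N := by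
      intro F; rw [hext_eq F.1 (x N) hxNK]; exact F.2.2
    have key : ∀ F : Sset, ContinuousOn (T (IccExtend hle (fun p => F.1 p))) K ∧
        T (IccExtend hle (fun p => F.1 p)) (x 0) = y 0 ∧
        T (IccExtend hle (fun p => F.1 p)) (x N) = y N :=
      fun F => part1 _ (hextC F.1).continuousOn (hext0 F) (hextN F)
    set Φ : Sset → Sset := fun F =>
      ⟨⟨K.restrict (T (IccExtend hle (fun p => F.1 p))), (key F).1.restrict⟩,
        ⟨(key F).2.1, (key F).2.2⟩⟩ with hΦdef
    -- nonemptiness of Sset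
    have hd : x N - x 0 ≠ 0 := by linarith
    set g0 : ℝ → ℝ := fun t => y 0 + (t - x 0) * ((y N - y 0) / (x N - x 0)) with hg0def
    have hF0 : (⟨fun p => g0 p, by
        exact (continuous_const.add ((continuous_subtype_val.sub continuous_const).mul
          continuous_const))⟩ : C(K, ℝ)) ∈ Sset := by
      constructor
      · show g0 (x 0) = y 0
        simp [hg0def]
      · show g0 (x N) = y N
        rw [hg0def]
        field_simp
        ring
    haveI : Nonempty Sset := ⟨_, hF0⟩
    -- contraction property of Φ
    have hΦlip : ∀ F G : Sset, dist (Φ F) (Φ G) ≤ A * dist F G := by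
      intro F G
      rw [Subtype.dist_eq, ContinuousMap.dist_le (mul_nonneg hA0 dist_nonneg)]
      rintro ⟨t, ht⟩
      obtain ⟨i, hi, hti⟩ := hpiece t ht
      show dist (T (IccExtend hle (fun p => F.1 p)) t) (T (IccExtend hle (fun p => G.1 p)) t) ≤ _
      rw [hT _ (hext0 F) (hextN F) i hi t hti, hT _ (hext0 G) (hextN G) i hi t hti]
      have hu : LmInv x N i t ∈ K := hmaps i hi t hti
      rw [hext_eq F.1 _ hu, hext_eq G.1 _ hu, Real.dist_eq]
      have heq : α i * F.1 ⟨_, hu⟩ + q i (LmInv x N i t) -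
          (α i * G.1 ⟨_, hu⟩ + q i (LmInv x N i t)) =
          α i * (F.1 ⟨_, hu⟩ - G.1 ⟨_, hu⟩) := by ring
      rw [heq, abs_mul]
      have h1 : |F.1 ⟨_, hu⟩ - G.1 ⟨_, hu⟩| ≤ dist F G := by
        rw [← Real.dist_eq, Subtype.dist_eq]
        exact ContinuousMap.dist_apply_le_dist _
      exact mul_le_mul (hAi i hi) h1 (abs_nonneg _) hA0
    set A' : NNReal := ⟨A, hA0⟩ with hA'def
    have hcw : ContractingWith A' Φ := by
      constructor
      · exact_mod_cast hA1
      · exact LipschitzWith.of_dist_le_mul fun F G => hΦlip F G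
    set Fstar : Sset := hcw.fixedPoint Φ with hFdef
    have hfix : Φ Fstar = Fstar := hcw.fixedPoint_isFixedPt
    set f : ℝ → ℝ := IccExtend hle (fun p => Fstar.1 p) with hfdef
    have hfF : ∀ t (ht : t ∈ K), f t = Fstar.1 ⟨t, ht⟩ := fun t ht => hext_eq Fstar.1 t ht
    have hfixpt : ∀ t ∈ K, T f t = f t := by
      intro t ht
      have h1 : (Φ Fstar).1 ⟨t, ht⟩ = Fstar.1 ⟨t, ht⟩ := by rw [hfix]
      calc T f t = (Φ Fstar).1 ⟨t, ht⟩ := rfl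
        _ = Fstar.1 ⟨t, ht⟩ := h1
        _ = f t := (hfF t ht).symm
    have hf0 : f (x 0) = y 0 := hext0 Fstar
    have hfN : f (x N) = y N := hextN Fstar
    refine ⟨f, (hextC Fstar.1).continuousOn, hf0, hfN, hfixpt, ?_, ?_⟩
    -- knot estimates
    · intro j hj
      rcases Nat.eq_zero_or_pos j with rfl | hj1
      · rw [hf0]; simp; linarith
      rcases Nat.eq_or_lt_of_le hj with rfl | hjN
      · rw [hfN]; simp; linarith
      -- 1 ≤ j < N
      have hj1' : j - 1 + 1 = j := by omega
      have hjm : j - 1 < N := by omega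
      have hmemj : x j ∈ Icc (x (j - 1)) (x (j - 1 + 1)) := by
        rw [hj1']
        exact ⟨le_of_lt (by rw [← hj1']; exact hx (j - 1) hjm), le_rfl⟩
      have h := hT f hf0 hfN (j - 1) hjm (x j) hmemj
      have hr : LmInv x N (j - 1) (x j) = x N := by
        have := LmInv_right x N (j - 1) h0N (hx (j - 1) hjm)
        rwa [hj1'] at this
      rw [hr, hfN] at h
      have hjoin' := hjoin (j - 1) (by omega)
      rw [hj1'] at hjoin'
      have hfj : f (x j) = ytil j := by
        rw [← hfixpt (x j) (hmem j hj), h, hjoin'.1]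
      obtain ⟨h1, h2⟩ := hytil j (by omega) hjN
      rw [hfj]
      exact abs_le.mpr ⟨by linarith, by linarith⟩
    -- uniqueness
    · intro g hg hg0 hgN hgfix t ht
      set G : Sset := ⟨⟨K.restrict g, hg.restrict⟩, ⟨hg0, hgN⟩⟩ with hGdef
      have hextG : ∀ u (hu : u ∈ K), IccExtend hle (fun p => G.1 p) u = g u := by
        intro u hu
        rw [hext_eq G.1 u hu]
        rfl
      have hGfix : Φ G = G := by
        apply Subtype.ext
        apply ContinuousMap.ext
        rintro ⟨u, hu⟩
        show T (IccExtend hle (fun p => G.1 p)) u = g u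
        obtain ⟨i, hi, hui⟩ := hpiece u hu
        rw [hT _ (hext0 G) (hextN G) i hi u hui,
          hextG _ (hmaps i hi u hui), ← hT g hg0 hgN i hi u hui]
        exact hgfix u hu
      have hGF : G = Fstar := hcw.fixedPoint_unique hGfix
      calc g t = G.1 ⟨t, ht⟩ := rfl
        _ = Fstar.1 ⟨t, ht⟩ := by rw [hGF]
        _ = f t := (hfF t ht).symm
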